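/- In the Face Lemma setup (p₁, p₂ ∈ ℂⁿ linearly independent column vectors; q₁†, q₂† linearly independent row vectors; qᵢ†pⱼ ≠ 0 for i,j ∈ {1,2}; nonzero α₁, α₂, β₁, β₂ ∈ ℂ with α₁+α₂ ≠ 0, β₁+β₂ ≠ 0, α₁+β₁ ≠ 0, α₂+β₂ ≠ 0; D := α₁β₂(q₂†p₁)(q₁†p₂) − α₂β₁(q₁†p₁)(q₂†p₂) ≠ 0; κ := α₁+α₂+β₁+β₂), define P₁, P₂, Q₁†, Q₂† as the outer cube vertices and set α₄ = −β₂ + κ·α₁β₂(q₂†p₁)(q₁†p₂)/D, α₅ = −β₁ − κ·α₂β₁(q₁†p₁)(q₂†p₂)/D, β₄ = −α₂ − κ·α₂β₁(q₁†p₁)(q₂†p₂)/D, β₅ = −α₁ + κ·α₁β₂(q₂†p₁)(q₁†p₂)/D. If Q₁†·P₁, Q₂†·P₁, Q₁†·P₂, Q₂†·P₂ are all nonzero, then the row-vector triple conditions at the nodes P₁ and P₂ hold: α₄·Q₁†/(Q₁†P₁) + α₅·Q₂†/(Q₂†P₁) − (α₁+α₂)·q₁† = 0 and β₄·Q₁†/(Q₁†P₂)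 + β₅·Q₂†/(Q₂†P₂) − (β₁+β₂)·q₂† = 0 (here q₁†·P₁ = 1 and q₂†·P₂ = 1). -/

import Mathlib

open Matrix

set_option maxHeartbeats 4000000 in
/-- Face Lemma, row-vector triple conditions at the nodes `P₁` and `P₂`:
`(Q₁†, Q₂†, q₁†)` form a `P₁`-based triple with parameters
`(α₄, α₅, −(α₁+α₂))`, and `(Q₁†, Q₂†, q₂†)` form a `P₂`-based triple with
parameters `(β₄, β₅, −(β₁+β₂))`. -/
theorem face_lemma_nodes_P₁_P₂ (n : ℕ) (p₁ p₂ q₁ q₂ : Fin n → ℂ)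
    (hp : LinearIndependent ℂ ![p₁, p₂]) (hq : LinearIndependent ℂ ![q₁, q₂])
    (h11 : q₁ ⬝ᵥ p₁ ≠ 0) (h12 : q₁ ⬝ᵥ p₂ ≠ 0)
    (h21 : q₂ ⬝ᵥ p₁ ≠ 0) (h22 : q₂ ⬝ᵥ p₂ ≠ 0)
    (α₁ α₂ β₁ β₂ : ℂ) (ha₁ : α₁ ≠ 0) (ha₂ : α₂ ≠ 0) (hb₁ : β₁ ≠ 0) (hb₂ : β₂ ≠ 0)
    (hαα : α₁ + α₂ ≠ 0) (hββ : β₁ + β₂ ≠ 0)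
    (hαβ₁ : α₁ + β₁ ≠ 0) (hαβ₂ : α₂ + β₂ ≠ 0)
    (D κ : ℂ)
    (hD : D = α₁ * β₂ * (q₂ ⬝ᵥ p₁) * (q₁ ⬝ᵥ p₂) -
        α₂ * β₁ * (q₁ ⬝ᵥ p₁) * (q₂ ⬝ᵥ p₂))
    (hD0 : D ≠ 0)
    (hκ : κ = α₁ + α₂ + β₁ + β₂)
    (P₁ P₂ Q₁ Q₂ : Fin n → ℂ)
    (hP₁ : P₁ = (α₁ + α₂)⁻¹ •
        (α₁ • ((q₁ ⬝ᵥ p₁)⁻¹ • p₁) + α₂ • ((q₁ ⬝ᵥ p₂)⁻¹ • p₂)))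
    (hP₂ : P₂ = (β₁ + β₂)⁻¹ •
        (β₁ • ((q₂ ⬝ᵥ p₁)⁻¹ • p₁) + β₂ • ((q₂ ⬝ᵥ p₂)⁻¹ • p₂)))
    (hQ₁ : Q₁ = (α₁ + β₁)⁻¹ •
        (α₁ • ((q₁ ⬝ᵥ p₁)⁻¹ • q₁) + β₁ • ((q₂ ⬝ᵥ p₁)⁻¹ • q₂)))
    (hQ₂ : Q₂ = (α₂ + β₂)⁻¹ •
        (α₂ • ((q₁ ⬝ᵥ p₂)⁻¹ • q₁) + β₂ • ((q₂ ⬝ᵥ p₂)⁻¹ • q₂)))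
    (α₄ α₅ β₄ β₅ : ℂ)
    (hα₄ : α₄ = -β₂ + κ * (α₁ * β₂ * (q₂ ⬝ᵥ p₁) * (q₁ ⬝ᵥ p₂)) / D)
    (hα₅ : α₅ = -β₁ - κ * (α₂ * β₁ * (q₁ ⬝ᵥ p₁) * (q₂ ⬝ᵥ p₂)) / D)
    (hβ₄ : β₄ = -α₂ - κ * (α₂ * β₁ * (q₁ ⬝ᵥ p₁) * (q₂ ⬝ᵥ p₂)) / D)
    (hβ₅ : β₅ = -α₁ + κ * (α₁ * β₂ * (q₂ ⬝ᵥ p₁) * (q₁ ⬝ᵥ p₂)) / D)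
    (h1 : Q₁ ⬝ᵥ P₁ ≠ 0) (h2 : Q₂ ⬝ᵥ P₁ ≠ 0)
    (h3 : Q₁ ⬝ᵥ P₂ ≠ 0) (h4 : Q₂ ⬝ᵥ P₂ ≠ 0) :
    q₁ ⬝ᵥ P₁ = 1 ∧ q₂ ⬝ᵥ P₂ = 1 ∧
    α₄ • ((Q₁ ⬝ᵥ P₁)⁻¹ • Q₁) + α₅ • ((Q₂ ⬝ᵥ P₁)⁻¹ • Q₂) - (α₁ + α₂) • q₁ = 0 ∧
    β₄ • ((Q₁ ⬝ᵥ P₂)⁻¹ • Q₁) + β₅ • ((Q₂ ⬝ᵥ P₂)⁻¹ • Q₂) - (β₁ + β₂) • q₂ = 0 := by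
  set a := q₁ ⬝ᵥ p₁ with ha
  set b := q₁ ⬝ᵥ p₂ with hb
  set c := q₂ ⬝ᵥ p₁ with hc
  set d := q₂ ⬝ᵥ p₂ with hd
  have hd11 : Q₁ ⬝ᵥ P₁ =
      (α₁ * (α₁ + α₂ + β₁) * (c * b) + α₂ * β₁ * (a * d)) /
        ((α₁ + β₁) * (α₁ + α₂) * (a * b * c)) := by
    rw [hQ₁, hP₁]
    simp only [smul_dotProduct, dotProduct_smul, add_dotProduct, dotProduct_add,
      smul_eq_mul, ← ha, ← hb, ← hc, ← hd]
    rw [eq_div_iff (by simp [hαα, hββ, hαβ₁, hαβ₂, h11, h12, h21, h22])]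
    field_simp
    first
    | (rw [div_eq_iff (by simp [hαα, hββ, hαβ₁, hαβ₂, h11, h12, h21, h22])]; ring)
    | ring
  have hd21 : Q₂ ⬝ᵥ P₁ =
      (α₂ * (α₁ + α₂ + β₂) * (a * d) + α₁ * β₂ * (c * b)) /
        ((α₂ + β₂) * (α₁ + α₂) * (a * b * d)) := by
    rw [hQ₂, hP₁]
    simp only [smul_dotProduct, dotProduct_smul, add_dotProduct, dotProduct_add,
      smul_eq_mul, ← ha, ← hb, ← hc, ← hd]
    rw [eq_div_iff (by simp [hαα, hββ, hαβ₁, hαβ₂, h11, h12, h21, h22])]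
    field_simp
    first
    | (rw [div_eq_iff (by simp [hαα, hββ, hαβ₁, hαβ₂, h11, h12, h21, h22])]; ring)
    | ring
  have hd12 : Q₁ ⬝ᵥ P₂ =
      (β₁ * (α₁ + β₁ + β₂) * (a * d) + α₁ * β₂ * (c * b)) /
        ((α₁ + β₁) * (β₁ + β₂) * (a * c * d)) := by
    rw [hQ₁, hP₂]
    simp only [smul_dotProduct, dotProduct_smul, add_dotProduct, dotProduct_add,
      smul_eq_mul, ← ha, ← hb, ← hc, ← hd]
    rw [eq_div_iff (by simp [hαα, hββ, hαβ₁, hαβ₂, h11, h12, h21, h22])]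
    field_simp
    first
    | (rw [div_eq_iff (by simp [hαα, hββ, hαβ₁, hαβ₂, h11, h12, h21, h22])]; ring)
    | ring
  have hd22 : Q₂ ⬝ᵥ P₂ =
      (β₂ * (α₂ + β₁ + β₂) * (c * b) + α₂ * β₁ * (a * d)) /
        ((α₂ + β₂) * (β₁ + β₂) * (b * c * d)) := by
    rw [hQ₂, hP₂]
    simp only [smul_dotProduct, dotProduct_smul, add_dotProduct, dotProduct_add,
      smul_eq_mul, ← ha, ← hb, ← hc, ← hd]
    rw [eq_div_iff (by simp [hαα, hββ, hαβ₁, hαβ₂, h11, h12, h21, h22])]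
    field_simp
    first
    | (rw [div_eq_iff (by simp [hαα, hββ, hαβ₁, hαβ₂, h11, h12, h21, h22])]; ring)
    | ring
  have hN11 : α₁ * (α₁ + α₂ + β₁) * (c * b) + α₂ * β₁ * (a * d) ≠ 0 := by
    intro h; apply h1; rw [hd11, h, zero_div]
  have hN21 : α₂ * (α₁ + α₂ + β₂) * (a * d) + α₁ * β₂ * (c * b) ≠ 0 := by
    intro h; apply h2; rw [hd21, h, zero_div]
  have hN12 : β₁ * (α₁ + β₁ + β₂) * (a * d) + α₁ * β₂ * (c * b) ≠ 0 := by
    intro h; apply h3; rw [hd12, h, zero_div]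
  have hN22 : β₂ * (α₂ + β₁ + β₂) * (c * b) + α₂ * β₁ * (a * d) ≠ 0 := by
    intro h; apply h4; rw [hd22, h, zero_div]
  subst hD hκ hα₄ hα₅ hβ₄ hβ₅
  refine ⟨?_, ?_, ?_, ?_⟩
  · rw [hP₁]
    simp only [smul_dotProduct, dotProduct_smul, add_dotProduct, dotProduct_add,
      smul_eq_mul, ← ha, ← hb]
    field_simp
  · rw [hP₂]
    simp only [smul_dotProduct, dotProduct_smul, add_dotProduct, dotProduct_add,
      smul_eq_mul, ← hc, ← hd]
    field_simp
  · have c1 : (-β₂ + (α₁ + α₂ + β₁ + β₂) * (α₁ * β₂ * c * b) / (α₁ * β₂ * c * b - α₂ * β₁ * a * d)) * (((α₁ * (α₁ + α₂ + β₁) * (c * b) + α₂ * β₁ * (a * d)) / ((α₁ + β₁) * (α₁ + α₂) * (a * b * c)))⁻¹ * ((α₁ + β₁)⁻¹ * (α₁ * a⁻¹))) +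
        (-β₁ - (α₁ + α₂ + β₁ + β₂) * (α₂ * β₁ * a * d) / (α₁ * β₂ * c * b - α₂ * β₁ * a * d)) * (((α₂ * (α₁ + α₂ + β₂) * (a * d) + α₁ * β₂ * (c * b)) / ((α₂ + β₂) * (α₁ + α₂) * (a * b * d)))⁻¹ * ((α₂ + β₂)⁻¹ * (α₂ * b⁻¹))) = α₁ + α₂ := by
      rw [inv_div, inv_div]
      generalize hX : α₁ * β₂ * c * b - α₂ * β₁ * a * d = X at hD0 ⊢
      generalize hY : α₁ * (α₁ + α₂ + β₁) * (c * b) + α₂ * β₁ * (a * d) = Y at hN11 ⊢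
      generalize hZ : α₂ * (α₁ + α₂ + β₂) * (a * d) + α₁ * β₂ * (c * b) = Z at hN21 ⊢
      field_simp
      subst hX hY hZ
      first
      | (rw [div_eq_iff (by simp [hαα, hββ, hαβ₁, hαβ₂, h11, h12, h21, h22, hN11, hN21, hN12, hN22, hD0])]; ring)
      | ring
    have c2 : (-β₂ + (α₁ + α₂ + β₁ + β₂) * (α₁ * β₂ * c * b) / (α₁ * β₂ * c * b - α₂ * β₁ * a * d)) * (((α₁ * (α₁ + α₂ + β₁) * (c * b) + α₂ * β₁ * (a * d)) / ((α₁ + β₁) * (α₁ + α₂) * (a * b * c)))⁻¹ * ((α₁ + β₁)⁻¹ * (β₁ * c⁻¹))) +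
        (-β₁ - (α₁ + α₂ + β₁ + β₂) * (α₂ * β₁ * a * d) / (α₁ * β₂ * c * b - α₂ * β₁ * a * d)) * (((α₂ * (α₁ + α₂ + β₂) * (a * d) + α₁ * β₂ * (c * b)) / ((α₂ + β₂) * (α₁ + α₂) * (a * b * d)))⁻¹ * ((α₂ + β₂)⁻¹ * (β₂ * d⁻¹))) = 0 := by
      rw [inv_div, inv_div]
      generalize hX : α₁ * β₂ * c * b - α₂ * β₁ * a * d = X at hD0 ⊢
      generalize hY : α₁ * (α₁ + α₂ + β₁) * (c * b) + α₂ * β₁ * (a * d) = Y at hN11 ⊢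
      generalize hZ : α₂ * (α₁ + α₂ + β₂) * (a * d) + α₁ * β₂ * (c * b) = Z at hN21 ⊢
      field_simp
      subst hX hY hZ
      first
      | (rw [div_eq_iff (by simp [hαα, hββ, hαβ₁, hαβ₂, h11, h12, h21, h22, hN11, hN21, hN12, hN22, hD0])]; ring)
      | ring
    rw [hd11, hd21, hQ₁, hQ₂]
    funext x
    simp only [Pi.add_apply, Pi.sub_apply, Pi.smul_apply, Pi.zero_apply, smul_eq_mul]
    linear_combination q₁ x * c1 + q₂ x * c2
  · have c3 : (-α₂ - (α₁ + α₂ + β₁ + β₂) * (α₂ * β₁ * a * d) / (α₁ * β₂ * c * b - α₂ * β₁ * a * d)) * (((β₁ * (α₁ + β₁ + β₂) * (a * d) + α₁ * β₂ * (c * b)) / ((α₁ + β₁) * (β₁ + β₂) * (a * c * d)))⁻¹ * ((α₁ + β₁)⁻¹ * (α₁ * a⁻¹))) +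
        (-α₁ + (α₁ + α₂ + β₁ + β₂) * (α₁ * β₂ * c * b) / (α₁ * β₂ * c * b - α₂ * β₁ * a * d)) * (((β₂ * (α₂ + β₁ + β₂) * (c * b) + α₂ * β₁ * (a * d)) / ((α₂ + β₂) * (β₁ + β₂) * (b * c * d)))⁻¹ * ((α₂ + β₂)⁻¹ * (α₂ * b⁻¹))) = 0 := by
      rw [inv_div, inv_div]
      generalize hX : α₁ * β₂ * c * b - α₂ * β₁ * a * d = X at hD0 ⊢
      generalize hY : β₁ * (α₁ + β₁ + β₂) * (a * d) + α₁ * β₂ * (c * b) = Y at hN12 ⊢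
      generalize hZ : β₂ * (α₂ + β₁ + β₂) * (c * b) + α₂ * β₁ * (a * d) = Z at hN22 ⊢
      field_simp
      subst hX hY hZ
      first
      | (rw [div_eq_iff (by simp [hαα, hββ, hαβ₁, hαβ₂, h11, h12, h21, h22, hN11, hN21, hN12, hN22, hD0])]; ring)
      | ring
    have c4 : (-α₂ - (α₁ + α₂ + β₁ + β₂) * (α₂ * β₁ * a * d) / (α₁ * β₂ * c * b - α₂ * β₁ * a * d)) * (((β₁ * (α₁ + β₁ + β₂) * (a * d) + α₁ * β₂ * (c * b)) / ((α₁ + β₁) * (β₁ + β₂) * (a * c * d)))⁻¹ * ((α₁ + β₁)⁻¹ * (β₁ * c⁻¹))) +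
        (-α₁ + (α₁ + α₂ + β₁ + β₂) * (α₁ * β₂ * c * b) / (α₁ * β₂ * c * b - α₂ * β₁ * a * d)) * (((β₂ * (α₂ + β₁ + β₂) * (c * b) + α₂ * β₁ * (a * d)) / ((α₂ + β₂) * (β₁ + β₂) * (b * c * d)))⁻¹ * ((α₂ + β₂)⁻¹ * (β₂ * d⁻¹))) = β₁ + β₂ := by
      rw [inv_div, inv_div]
      generalize hX : α₁ * β₂ * c * b - α₂ * β₁ * a * d = X at hD0 ⊢
      generalize hY : β₁ * (α₁ + β₁ + β₂) * (a * d) + α₁ * β₂ * (c * b) = Y at hN12 ⊢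
      generalize hZ : β₂ * (α₂ + β₁ + β₂) * (c * b) + α₂ * β₁ * (a * d) = Z at hN22 ⊢
      field_simp
      subst hX hY hZ
      first
      | (rw [div_eq_iff (by simp [hαα, hββ, hαβ₁, hαβ₂, h11, h12, h21, h22, hN11, hN21, hN12, hN22, hD0])]; ring)
      | ring
    rw [hd12, hd22, hQ₁, hQ₂]
    funext x
    simp only [Pi.add_apply, Pi.sub_apply, Pi.smul_apply, Pi.zero_apply, smul_eq_mul]
    linear_combination q₁ x * c3 + q₂ x * c4
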